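/- Let P_n, P be Borel probability measures on a separable metric space S such that P_n → P weakly and P_n(ψ) → P(ψ) ∈ (0,∞) for some continuous function ψ: S → [0,∞), where P(ψ) = ∫ ψ dP. Then the ψ-biased probability measures converge weakly: P_n^ψ → P^ψ, where P^ψ(A) = (∫_A ψ dP)/P(ψ). -/

import Mathlib

open MeasureTheory Filter
open scoped Topology

noncomputable section

/-- The `ψ`-biased probability measure `P^ψ(A) = (∫_A ψ dP)/P(ψ)`. -/
def biasedMeasure {S : Type*} [MeasurableSpace S] (P : Measure S) (ψ : S → ℝ) :
    Measure S :=
  (ENNReal.ofReal (∫ z, ψ z ∂P))⁻¹ • P.withDensity fun z => ENNReal.ofReal (ψ z)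

lemma integral_biasedMeasure {S : Type*} [MeasurableSpace S] [TopologicalSpace S]
    [BorelSpace S] (P : Measure S) (ψ : S → ℝ) (hψc : Continuous ψ)
    (hψ0 : ∀ z, 0 ≤ ψ z) (φ : S → ℝ) :
    ∫ z, φ z ∂(biasedMeasure P ψ) = (∫ z, ψ z ∂P)⁻¹ * ∫ z, ψ z * φ z ∂P := by
  have hmeas : Measurable fun z => (ψ z).toNNReal :=
    (hψc.measurable).real_toNNReal
  have hdens : (fun z => ENNReal.ofReal (ψ z)) =
      fun z => ((ψ z).toNNReal : ENNReal) := rfl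
  rw [biasedMeasure, integral_smul_measure, hdens,
    integral_withDensity_eq_integral_smul hmeas]
  have h1 : (fun z => (ψ z).toNNReal • φ z) = fun z => ψ z * φ z := by
    funext z
    simp [NNReal.smul_def, Real.coe_toNNReal _ (hψ0 z)]
  rw [h1, ENNReal.toReal_inv, ENNReal.toReal_ofReal (integral_nonneg hψ0),
    smul_eq_mul]

/-- Key estimate: truncation error bound. -/
lemma trunc_bound {S : Type*} [MeasurableSpace S] [TopologicalSpace S] [BorelSpace S]
    (μ : Measure S) (ψ : S → ℝ) (hψc : Continuous ψ) (hψ0 : ∀ z, 0 ≤ ψ z)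
    (hint : Integrable ψ μ) (φ : S → ℝ) (hφc : Continuous φ) {C : ℝ} (hC0 : 0 ≤ C)
    (hC : ∀ z, |φ z| ≤ C) (m : ℝ) (hm : 0 ≤ m) :
    |∫ z, ψ z * φ z ∂μ - ∫ z, min (ψ z) m * φ z ∂μ| ≤
      C * (∫ z, ψ z ∂μ - ∫ z, min (ψ z) m ∂μ) := by
  have hgc : Continuous fun z => min (ψ z) m := hψc.min continuous_const
  have hg_int : Integrable (fun z => min (ψ z) m) μ :=
    hint.mono hgc.aestronglyMeasurable (ae_of_all _ fun z => by
      rw [Real.norm_eq_abs, Real.norm_eq_abs, abs_of_nonneg (le_min (hψ0 z) hm),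
        abs_of_nonneg (hψ0 z)]
      exact min_le_left _ _)
  have hφm : AEStronglyMeasurable φ μ := hφc.aestronglyMeasurable
  have hψφ : Integrable (fun z => ψ z * φ z) μ := by
    simpa [mul_comm] using hint.bdd_mul (c := C) hφm (ae_of_all _ fun z => by
      rw [Real.norm_eq_abs]; exact hC z)
  have hgφ : Integrable (fun z => min (ψ z) m * φ z) μ := by
    simpa [mul_comm] using hg_int.bdd_mul (c := C) hφm (ae_of_all _ fun z => by
      rw [Real.norm_eq_abs]; exact hC z)
  rw [← integral_sub hψφ hgφ, ← integral_sub hint hg_int, ← integral_const_mul]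
  calc |∫ z, (ψ z * φ z - min (ψ z) m * φ z) ∂μ|
      ≤ ∫ z, |ψ z * φ z - min (ψ z) m * φ z| ∂μ := by
        simpa [Real.norm_eq_abs] using
          norm_integral_le_integral_norm (fun z => ψ z * φ z - min (ψ z) m * φ z)
    _ ≤ ∫ z, C * (ψ z - min (ψ z) m) ∂μ := by
        apply integral_mono (hψφ.sub hgφ).abs ((hint.sub hg_int).const_mul C)
        intro z
        have h1 : 0 ≤ ψ z - min (ψ z) m := sub_nonneg.2 (min_le_left _ _)
        calc |ψ z * φ z - min (ψ z) m * φ z| = |ψ z - min (ψ z) m| * |φ z| := by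
              rw [← abs_mul]; ring_nf
          _ ≤ (ψ z - min (ψ z) m) * C := by
              rw [abs_of_nonneg h1]
              exact mul_le_mul_of_nonneg_left (hC z) h1
          _ = C * (ψ z - min (ψ z) m) := mul_comm _ _


lemma trunc_tendsto {S : Type*} [MeasurableSpace S] [TopologicalSpace S] [BorelSpace S]
    (P : Measure S) (ψ : S → ℝ) (hψc : Continuous ψ) (hψ0 : ∀ z, 0 ≤ ψ z)
    (hint : Integrable ψ P) :
    Tendsto (fun m : ℕ => ∫ z, min (ψ z) (m : ℝ) ∂P) atTop (𝓝 (∫ z, ψ z ∂P)) := by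
  apply tendsto_integral_of_dominated_convergence ψ
    (fun m => (hψc.min continuous_const).aestronglyMeasurable) hint
  · intro m
    filter_upwards with z
    rw [Real.norm_eq_abs, abs_of_nonneg (le_min (hψ0 z) (Nat.cast_nonneg m))]
    exact min_le_left _ _
  · filter_upwards with z
    obtain ⟨N, hN⟩ := exists_nat_ge (ψ z)
    have he : (fun m : ℕ => min (ψ z) (m : ℝ)) =ᶠ[atTop] fun _ => ψ z :=
      eventually_atTop.2 ⟨N, fun m hm =>
        min_eq_left (hN.trans (Nat.cast_le.2 hm))⟩
    exact Tendsto.congr' he.symm tendsto_const_nhds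

/-- **Lemma (weak convergence of biased measures).**
Let `P_n, P` be Borel probability measures on a separable metric space with
`P_n → P` weakly and `P_n(ψ) → P(ψ) ∈ (0,∞)` for a continuous `ψ ≥ 0`. Then the
`ψ`-biased measures converge weakly: `P_n^ψ → P^ψ`. -/
theorem biased_weak_convergence
    {S : Type*} [MetricSpace S] [TopologicalSpace.SeparableSpace S]
    [MeasurableSpace S] [BorelSpace S]
    (Pn : ℕ → Measure S) (P : Measure S)
    (hPn : ∀ n, IsProbabilityMeasure (Pn n)) (hP : IsProbabilityMeasure P)
    (ψ : S → ℝ) (hψc : Continuous ψ) (hψ0 : ∀ z, 0 ≤ ψ z)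
    (hweak : ∀ φ : S → ℝ, Continuous φ → (∃ C, ∀ z, |φ z| ≤ C) →
      Tendsto (fun n => ∫ z, φ z ∂(Pn n)) atTop (𝓝 (∫ z, φ z ∂P)))
    (hintn : ∀ n, Integrable ψ (Pn n)) (hint : Integrable ψ P)
    (hpos : 0 < ∫ z, ψ z ∂P)
    (hlim : Tendsto (fun n => ∫ z, ψ z ∂(Pn n)) atTop (𝓝 (∫ z, ψ z ∂P))) :
    ∀ φ : S → ℝ, Continuous φ → (∃ C, ∀ z, |φ z| ≤ C) →
      Tendsto (fun n => ∫ z, φ z ∂(biasedMeasure (Pn n) ψ)) atTop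
        (𝓝 (∫ z, φ z ∂(biasedMeasure P ψ))) := by
  intro φ hφc hφb
  obtain ⟨C₀, hC₀⟩ := hφb
  set C : ℝ := max C₀ 0 with hCdef
  have hC0 : 0 ≤ C := le_max_right _ _
  have hC : ∀ z, |φ z| ≤ C := fun z => (hC₀ z).trans (le_max_left _ _)
  -- main step: ∫ ψφ dPn → ∫ ψφ dP
  have key : Tendsto (fun n => ∫ z, ψ z * φ z ∂(Pn n)) atTop
      (𝓝 (∫ z, ψ z * φ z ∂P)) := by
    rw [Metric.tendsto_nhds]
    intro ε hε
    set ε₁ : ℝ := ε / (6 * (C + 1)) with hε₁def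
    have hC1 : (0:ℝ) < C + 1 := by linarith
    have hε₁ : 0 < ε₁ := div_pos hε (by linarith)
    -- choose truncation level m
    have htr := trunc_tendsto P ψ hψc hψ0 hint
    have : ∀ᶠ m : ℕ in atTop,
        ∫ z, ψ z ∂P - ∫ z, min (ψ z) (m : ℝ) ∂P < ε₁ := by
      have := htr.eventually (eventually_gt_nhds
        (show ∫ z, ψ z ∂P - ε₁ < ∫ z, ψ z ∂P by linarith))
      filter_upwards [this] with m hm
      linarith
    obtain ⟨m, hm⟩ := this.exists
    have hmn : (0:ℝ) ≤ (m:ℝ) := Nat.cast_nonneg m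
    have hgc : Continuous fun z => min (ψ z) (m:ℝ) := hψc.min continuous_const
    have hgabs : ∀ z, |min (ψ z) (m:ℝ)| ≤ (m:ℝ) := fun z => by
      rw [abs_of_nonneg (le_min (hψ0 z) hmn)]; exact min_le_right _ _
    -- weak convergence of the truncated functionals
    have h2 : Tendsto (fun n => ∫ z, min (ψ z) (m:ℝ) * φ z ∂(Pn n)) atTop
        (𝓝 (∫ z, min (ψ z) (m:ℝ) * φ z ∂P)) := by
      apply hweak _ (hgc.mul hφc)
      exact ⟨(m:ℝ) * C, fun z => by
        rw [Pi.mul_apply, abs_mul]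
        exact mul_le_mul (hgabs z) (hC z) (abs_nonneg _) hmn⟩
    have h3 : Tendsto (fun n => ∫ z, min (ψ z) (m:ℝ) ∂(Pn n)) atTop
        (𝓝 (∫ z, min (ψ z) (m:ℝ) ∂P)) := hweak _ hgc ⟨m, hgabs⟩
    -- eventual bounds
    have E1 : ∀ᶠ n in atTop,
        ∫ z, ψ z ∂(Pn n) - ∫ z, min (ψ z) (m:ℝ) ∂(Pn n) < 2 * ε₁ := by
      have h4 := hlim.sub h3
      exact h4.eventually (eventually_lt_nhds (by linarith))
    have E2 : ∀ᶠ n in atTop,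
        dist (∫ z, min (ψ z) (m:ℝ) * φ z ∂(Pn n))
          (∫ z, min (ψ z) (m:ℝ) * φ z ∂P) < ε / 3 :=
      (Metric.tendsto_nhds.1 h2) (ε/3) (by linarith)
    filter_upwards [E1, E2] with n hn1 hn2
    rw [Real.dist_eq] at hn2 ⊢
    have tb1 := trunc_bound (Pn n) ψ hψc hψ0 (hintn n) φ hφc hC0 hC (m:ℝ) hmn
    have tb2 := trunc_bound P ψ hψc hψ0 hint φ hφc hC0 hC (m:ℝ) hmn
    have tri : |∫ z, ψ z * φ z ∂(Pn n) - ∫ z, ψ z * φ z ∂P| ≤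
        |∫ z, ψ z * φ z ∂(Pn n) - ∫ z, min (ψ z) (m:ℝ) * φ z ∂(Pn n)| +
        |∫ z, min (ψ z) (m:ℝ) * φ z ∂(Pn n) - ∫ z, min (ψ z) (m:ℝ) * φ z ∂P| +
        |∫ z, min (ψ z) (m:ℝ) * φ z ∂P - ∫ z, ψ z * φ z ∂P| := by
      have := abs_sub_le (∫ z, ψ z * φ z ∂(Pn n))
        (∫ z, min (ψ z) (m:ℝ) * φ z ∂(Pn n)) (∫ z, ψ z * φ z ∂P)
      have := abs_sub_le (∫ z, min (ψ z) (m:ℝ) * φ z ∂(Pn n))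
        (∫ z, min (ψ z) (m:ℝ) * φ z ∂P) (∫ z, ψ z * φ z ∂P)
      linarith
    rw [abs_sub_comm] at tb2
    have b1 : C * (∫ z, ψ z ∂(Pn n) - ∫ z, min (ψ z) (m:ℝ) ∂(Pn n)) ≤
        C * (2 * ε₁) := mul_le_mul_of_nonneg_left hn1.le hC0
    have b2 : C * (∫ z, ψ z ∂P - ∫ z, min (ψ z) (m:ℝ) ∂P) ≤ C * ε₁ :=
      mul_le_mul_of_nonneg_left hm.le hC0
    have hkey : 3 * (C * ε₁) ≤ ε / 2 := by
      rw [hε₁def]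
      have step : 3 * (C * (ε / (6 * (C + 1)))) ≤
          3 * ((C + 1) * (ε / (6 * (C + 1)))) := by
        have h0 : 0 ≤ ε / (6 * (C + 1)) := by positivity
        nlinarith
      have step2 : 3 * ((C + 1) * (ε / (6 * (C + 1)))) = ε / 2 := by
        field_simp
        ring
      linarith
    linarith
  -- conclude via the integral formula for biased measures
  have hIne : (∫ z, ψ z ∂P) ≠ 0 := ne_of_gt hpos
  have final := (hlim.inv₀ hIne).mul key
  have e : ∀ μ : Measure S, ∫ z, φ z ∂(biasedMeasure μ ψ) =
      (∫ z, ψ z ∂μ)⁻¹ * ∫ z, ψ z * φ z ∂μ :=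
    fun μ => integral_biasedMeasure μ ψ hψc hψ0 φ
  simp only [e]
  exact final

end
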